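/- Let k be a field of characteristic 2 and t ∈ k with t ∉ k². Let b, f ∈ k[X] be polynomials of degree at most 1 such that the ideal m of k[X,Y] generated by X² − t and bY − f is maximal. Then m contains a nonzero polynomial of total degree at most 1. (Equivalently: every closed point of the affine plane of degree 2 with purely inseparable residue field lies on a line defined over k.) -/
import Mathlib


/-- Let `k` be a field of characteristic `2` and `t ∈ k \ k²`.  If `b, f ∈ k[X]` have degree at
most `1` and the ideal `m = (X² − t, b(X)Y − f(X))` of `k[X,Y]` is maximal, then `m` contains a
nonzero polynomial of total degree at most `1`: the corresponding purely inseparable point of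
degree `2` of the affine plane lies on a line defined over `k`. -/
theorem degree_two_inseparable_point_on_line (k : Type*) [Field k] [CharP k 2]
    (t : k) (ht : ∀ a : k, a ^ 2 ≠ t) (b f : Polynomial k)
    (hb : b.natDegree ≤ 1) (hf : f.natDegree ≤ 1)
    (hm : (Ideal.span
      {MvPolynomial.X 0 ^ 2 - MvPolynomial.C t,
       Polynomial.aeval (MvPolynomial.X 0 : MvPolynomial (Fin 2) k) b * MvPolynomial.X 1 -
         Polynomial.aeval (MvPolynomial.X 0 : MvPolynomial (Fin 2) k) f} :
      Ideal (MvPolynomial (Fin 2) k)).IsMaximal) :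
    ∃ F ∈ (Ideal.span
      {MvPolynomial.X 0 ^ 2 - MvPolynomial.C t,
       Polynomial.aeval (MvPolynomial.X 0 : MvPolynomial (Fin 2) k) b * MvPolynomial.X 1 -
         Polynomial.aeval (MvPolynomial.X 0 : MvPolynomial (Fin 2) k) f} :
      Ideal (MvPolynomial (Fin 2) k)), F ≠ 0 ∧ F.totalDegree ≤ 1 := by
  classical
  set X0 : MvPolynomial (Fin 2) k := MvPolynomial.X 0 with hX0
  set X1 : MvPolynomial (Fin 2) k := MvPolynomial.X 1 with hX1
  set g1 : MvPolynomial (Fin 2) k := X0 ^ 2 - MvPolynomial.C t with hg1def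
  set g2 : MvPolynomial (Fin 2) k :=
    Polynomial.aeval X0 b * X1 - Polynomial.aeval X0 f with hg2def
  set m : Ideal (MvPolynomial (Fin 2) k) := Ideal.span {g1, g2} with hmdef
  have hg1m : g1 ∈ m := Ideal.subset_span (Set.mem_insert _ _)
  have hg2m : g2 ∈ m := Ideal.subset_span (Set.mem_insert_of_mem _ rfl)
  -- retraction sending X0 ↦ X, X1 ↦ 0
  have key : ∀ p : Polynomial k,
      (MvPolynomial.aeval ![Polynomial.X, 0] : MvPolynomial (Fin 2) k →ₐ[k] Polynomial k)
        (Polynomial.aeval X0 p) = p := by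
    intro p
    rw [← Polynomial.aeval_algHom_apply]
    simp [hX0, Polynomial.aeval_X_left_apply]
  have inj : ∀ p : Polynomial k, Polynomial.aeval X0 p = 0 → p = 0 := by
    intro p hp
    have := key p
    rw [hp, map_zero] at this
    exact this.symm
  set b1 : k := b.coeff 1 with hb1def
  set b0 : k := b.coeff 0 with hb0def
  set f1 : k := f.coeff 1 with hf1def
  set f0 : k := f.coeff 0 with hf0def
  have hbe : b = Polynomial.C b1 * Polynomial.X + Polynomial.C b0 :=
    Polynomial.eq_X_add_C_of_natDegree_le_one hb
  have hfe : f = Polynomial.C f1 * Polynomial.X + Polynomial.C f0 :=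
    Polynomial.eq_X_add_C_of_natDegree_le_one hf
  have haeb : Polynomial.aeval X0 b = MvPolynomial.C b1 * X0 + MvPolynomial.C b0 := by
    conv_lhs => rw [hbe]
    simp [MvPolynomial.algebraMap_eq]
  have haef : Polynomial.aeval X0 f = MvPolynomial.C f1 * X0 + MvPolynomial.C f0 := by
    conv_lhs => rw [hfe]
    simp [MvPolynomial.algebraMap_eq]
  have hdeg : ∀ u v : k, (MvPolynomial.C u * X0 + MvPolynomial.C v).totalDegree ≤ 1 := by
    intro u v
    refine le_trans (MvPolynomial.totalDegree_add _ _) (max_le ?_ ?_)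
    · refine le_trans (MvPolynomial.totalDegree_mul _ _) ?_
      simp [hX0, MvPolynomial.totalDegree_X, MvPolynomial.totalDegree_C]
    · simp [MvPolynomial.totalDegree_C]
  by_cases hb0 : b = 0
  · by_cases hf0 : f = 0
    · -- m = (X0^2 - t); use maximality to get X1 ∈ m
      have hg2z : g2 = 0 := by rw [hg2def, hb0, hf0]; simp
      set J : Ideal (MvPolynomial (Fin 2) k) := Ideal.span {g1, X1} with hJdef
      have hle : m ≤ J := by
        rw [hmdef, Ideal.span_le]
        rintro x (rfl | rfl)
        · exact Ideal.subset_span (Set.mem_insert _ _)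
        · rw [hg2z]; exact J.zero_mem
      have hJne : J ≠ ⊤ := by
        intro hJtop
        set q : Polynomial k := Polynomial.X ^ 2 - Polynomial.C t with hq
        have hqd : q.natDegree = 2 := by
          rw [hq]
          compute_degree!
        have : Nontrivial (AdjoinRoot q) := by
          apply AdjoinRoot.nontrivial
          rw [Polynomial.degree_eq_natDegree (by intro h; rw [h] at hqd; simp at hqd), hqd]
          simp
        set φ := (MvPolynomial.aeval ![AdjoinRoot.root q, 0] :
          MvPolynomial (Fin 2) k →ₐ[k] AdjoinRoot q) with hφ
        have hker : J ≤ RingHom.ker (φ : MvPolynomial (Fin 2) k →+* AdjoinRoot q) := by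
          rw [hJdef, Ideal.span_le]
          rintro x (rfl | rfl) <;> rw [SetLike.mem_coe, RingHom.mem_ker]
          · have h2 : (Polynomial.aeval (AdjoinRoot.root q)) q = 0 := by
              rw [AdjoinRoot.aeval_eq, AdjoinRoot.mk_self]
            rw [hq] at h2
            simp only [map_sub, map_pow, Polynomial.aeval_X, Polynomial.aeval_C] at h2
            rw [hφ, hg1def, hX0]
            simp only [map_sub, map_pow, MvPolynomial.aeval_X, MvPolynomial.aeval_C,
              Matrix.cons_val_zero, AdjoinRoot.algebraMap_eq]
            simpa [AdjoinRoot.algebraMap_eq] using h2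
          · simp [hφ, hX1]
        have : (1 : MvPolynomial (Fin 2) k) ∈ RingHom.ker
            (φ : MvPolynomial (Fin 2) k →+* AdjoinRoot q) :=
          hker (hJtop ▸ Submodule.mem_top)
        rw [RingHom.mem_ker, map_one] at this
        exact one_ne_zero this
      have hmJ : m = J := hm.eq_of_le hJne hle
      refine ⟨X1, hmJ ▸ Ideal.subset_span (Set.mem_insert_of_mem _ rfl), ?_, ?_⟩
      · exact MvPolynomial.X_ne_zero 1
      · rw [hX1, MvPolynomial.totalDegree_X]
    · -- b = 0, f ≠ 0 : g2 = - aeval f works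
      refine ⟨g2, hg2m, ?_, ?_⟩
      · intro h
        rw [hg2def, hb0] at h
        simp only [map_zero, zero_mul, zero_sub, neg_eq_zero] at h
        exact hf0 (inj f h)
      · rw [hg2def, hb0]
        simp only [map_zero, zero_mul, zero_sub, MvPolynomial.totalDegree_neg]
        rw [haef]
        exact hdeg f1 f0
  · -- main case: b ≠ 0
    have hΔ : b1 ^ 2 * t - b0 ^ 2 ≠ 0 := by
      intro h
      by_cases h1 : b1 = 0
      · have hb00 : b0 = 0 := by
          have h2 : b0 ^ 2 = 0 := by rw [h1] at h; linear_combination -h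
          exact (pow_eq_zero_iff (by norm_num : (2 : ℕ) ≠ 0)).mp h2
        exact hb0 (by rw [hbe, h1, hb00]; simp)
      · refine ht (b0 / b1) ?_
        rw [div_pow, div_eq_iff (pow_ne_zero 2 h1)]
        linear_combination -h
    set Δ : k := b1 ^ 2 * t - b0 ^ 2 with hΔdef
    set c : k := (f1 * b1 * t - b0 * f0) / Δ with hc
    set d : k := (b1 * f0 - b0 * f1) / Δ with hd
    have h1 : b1 * c + b0 * d = f1 := by
      rw [hc, hd]
      field_simp
      ring
    have h2 : b0 * c + b1 * d * t = f0 := by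
      rw [hc, hd]
      field_simp
      ring
    have H1 : MvPolynomial.C b1 * MvPolynomial.C c + MvPolynomial.C b0 * MvPolynomial.C d
        = (MvPolynomial.C f1 : MvPolynomial (Fin 2) k) := by
      rw [← MvPolynomial.C_mul, ← MvPolynomial.C_mul, ← MvPolynomial.C_add, h1]
    have H2 : MvPolynomial.C b0 * MvPolynomial.C c
        + MvPolynomial.C b1 * MvPolynomial.C d * MvPolynomial.C t
        = (MvPolynomial.C f0 : MvPolynomial (Fin 2) k) := by
      rw [← MvPolynomial.C_mul, ← MvPolynomial.C_mul, ← MvPolynomial.C_mul, ← MvPolynomial.C_add,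
        h2]
    set F : MvPolynomial (Fin 2) k := X1 - MvPolynomial.C d * X0 - MvPolynomial.C c with hF
    have hid : (MvPolynomial.C b1 * X0 + MvPolynomial.C b0) * F
        = g2 - MvPolynomial.C (b1 * d) * g1 := by
      rw [hF, hg2def, hg1def, haeb, haef, MvPolynomial.C_mul]
      linear_combination (-X0) * H1 - H2
    have hmem : (MvPolynomial.C b1 * X0 + MvPolynomial.C b0) * F ∈ m := by
      rw [hid]
      exact Ideal.sub_mem _ hg2m (Ideal.mul_mem_left _ _ hg1m)
    rcases hm.isPrime.mem_or_mem hmem with h | h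
    · refine ⟨_, h, ?_, hdeg b1 b0⟩
      intro h0
      exact hb0 (inj b (by rw [haeb]; exact h0))
    · refine ⟨F, h, ?_, ?_⟩
      · intro h0
        have := congrArg (MvPolynomial.aeval ![(0 : Polynomial k), Polynomial.X] :
          MvPolynomial (Fin 2) k →ₐ[k] Polynomial k) h0
        rw [map_zero] at this
        simp only [hF, map_sub, map_mul, MvPolynomial.aeval_X, MvPolynomial.aeval_C,
          MvPolynomial.algebraMap_eq] at this
        simp only [hX0, hX1, MvPolynomial.aeval_X] at this
        norm_num at this
        exact Polynomial.X_sub_C_ne_zero c this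
      · rw [hF]
        refine le_trans (MvPolynomial.totalDegree_sub _ _) (max_le ?_ ?_)
        · refine le_trans (MvPolynomial.totalDegree_sub _ _) (max_le ?_ ?_)
          · rw [hX1, MvPolynomial.totalDegree_X]
          · refine le_trans (MvPolynomial.totalDegree_mul _ _) ?_
            simp [hX0, MvPolynomial.totalDegree_X, MvPolynomial.totalDegree_C]
        · simp [MvPolynomial.totalDegree_C]
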